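/- arXiv:1606.09342 — 4 statements merged into one kernel-verified Lean document; each statement's English description precedes it below -/
import Mathlib

section
/- Let A = A₁ + A₂ be the core-EP decomposition of A ∈ ℂ^{n×n} with Ind(A) = k. Then the core-EP inverse of A equals the core inverse of A₁: A^⊕ₑ = A₁^⊕. -/
open Matrix

namespace CoreEP

variable {I : Type*} [Fintype I] [DecidableEq I]

/-- `X` is the Moore-Penrose inverse of `A` (four Penrose equations). -/
def IsMPInv (A X : Matrix I I ℂ) : Prop :=
  A * X * A = A ∧ X * A * X = X ∧ (A * X)ᴴ = A * X ∧ (X * A)ᴴ = X * A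

/-- The column space of `X` is contained in the column space of `A`. -/
def rangeLE (X A : Matrix I I ℂ) : Prop :=
  LinearMap.range X.mulVecLin ≤ LinearMap.range A.mulVecLin

/-- `A` is group-invertible (index at most one): `rank (A²) = rank A`. -/
def GroupInvertible (A : Matrix I I ℂ) : Prop :=
  (A ^ 2).rank = A.rank

/-- `X` is the core inverse of `A`: `A X = A A†` and `range X ⊆ range A`. -/
def IsCoreInv (A X : Matrix I I ℂ) : Prop :=
  (∃ D, IsMPInv A D ∧ A * X = A * D) ∧ rangeLE X A

/-- `X` is the core-EP inverse of `A` with index `k`. -/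
def IsCoreEPInv (A X : Matrix I I ℂ) (k : ℕ) : Prop :=
  X * A ^ (k + 1) = A ^ k ∧ X * A * X = X ∧ (A * X)ᴴ = A * X ∧ rangeLE X (A ^ k)

/-- `k` is the index of `A`: the smallest `k` with `rank A^(k+1) = rank A^k`. -/
def HasIndex (A : Matrix I I ℂ) (k : ℕ) : Prop :=
  (A ^ (k + 1)).rank = (A ^ k).rank ∧ ∀ j, (A ^ (j + 1)).rank = (A ^ j).rank → k ≤ j

/-- `A = A₁ + A₂` is a core-EP decomposition with nilpotency exponent `k`. -/
def IsCoreEPDecomp (A A₁ A₂ : Matrix I I ℂ) (k : ℕ) : Prop :=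
  A = A₁ + A₂ ∧ GroupInvertible A₁ ∧ A₂ ^ k = 0 ∧ A₁ᴴ * A₂ = 0 ∧ A₂ * A₁ = 0

/-- The core-EP (pre-)order: `A^⊕ₑ A = A^⊕ₑ B` and `A A^⊕ₑ = B A^⊕ₑ`. -/
def CoreEPLE (A B : Matrix I I ℂ) : Prop :=
  ∃ k X, HasIndex A k ∧ IsCoreEPInv A X k ∧ X * A = X * B ∧ A * X = B * X

/-- The core partial order on group-invertible matrices. -/
def CoreLE (A B : Matrix I I ℂ) : Prop :=
  GroupInvertible A ∧ GroupInvertible B ∧ ∃ X, IsCoreInv A X ∧ X * A = X * B ∧ A * X = B * X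

/-- The minus partial order: `rank (B - A) = rank B - rank A`. -/
def MinusLE (A B : Matrix I I ℂ) : Prop :=
  (B - A).rank + A.rank = B.rank

/-- The core-minus order: core order on the group-invertible parts and
minus order on the nilpotent parts of the core-EP decompositions. -/
def CMLE (A B : Matrix I I ℂ) : Prop :=
  ∃ k l A₁ A₂ B₁ B₂, HasIndex A k ∧ HasIndex B l ∧
    IsCoreEPDecomp A A₁ A₂ k ∧ IsCoreEPDecomp B B₁ B₂ l ∧
    CoreLE A₁ B₁ ∧ MinusLE A₂ B₂

lemma eq_zero_of_mulVec_zero {M : Matrix I I ℂ} (h : ∀ v, M *ᵥ v = 0) : M = 0 := by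
  ext i j
  have := congrFun (h (Pi.single j 1)) i
  simpa using this

/-- A column-space inclusion yields a factorization. -/
lemma exists_factor {X A : Matrix I I ℂ} (h : rangeLE X A) : ∃ U, X = A * U := by
  choose u hu using fun j => h ⟨Pi.single j 1, rfl⟩
  refine ⟨Matrix.of (fun i j => u j i), ?_⟩
  ext i j
  have := congrFun (hu j) i
  simp only [mulVecLin_apply, mulVec_single, mul_one, MulOpposite.op_one, one_smul, Matrix.col_apply] at this
  rw [← this]
  simp [Matrix.mul_apply, Matrix.mulVec, dotProduct]

omit [DecidableEq I] in
lemma rangeLE_mul (A B : Matrix I I ℂ) : rangeLE (A * B) A := by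
  rw [rangeLE, Matrix.mulVecLin_mul]
  exact LinearMap.range_comp_le_range _ _

lemma ker_sq {A : Matrix I I ℂ} (h : GroupInvertible A) :
    LinearMap.ker (A ^ 2).mulVecLin = LinearMap.ker A.mulVecLin := by
  have hle : LinearMap.ker A.mulVecLin ≤ LinearMap.ker (A ^ 2).mulVecLin := by
    intro v hv
    simp only [LinearMap.mem_ker, mulVecLin_apply] at *
    rw [pow_two, ← mulVec_mulVec, hv, mulVec_zero]
  refine (Submodule.eq_of_le_of_finrank_eq hle ?_).symm
  have h1 := LinearMap.finrank_range_add_finrank_ker (A.mulVecLin)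
  have h2 := LinearMap.finrank_range_add_finrank_ker ((A ^ 2).mulVecLin)
  have h3 : (A ^ 2).rank = A.rank := h
  rw [Matrix.rank, Matrix.rank] at h3
  omega

lemma cancel_left {A : Matrix I I ℂ} (h : GroupInvertible A) {W : Matrix I I ℂ}
    (hW : A * (A * W) = 0) : A * W = 0 := by
  apply eq_zero_of_mulVec_zero
  intro v
  have hv : W *ᵥ v ∈ LinearMap.ker (A ^ 2).mulVecLin := by
    simp only [LinearMap.mem_ker, mulVecLin_apply, pow_two, mulVec_mulVec,
      Matrix.mul_assoc, hW, zero_mulVec]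
  rw [ker_sq h, LinearMap.mem_ker, mulVecLin_apply] at hv
  rw [← mulVec_mulVec, hv]

lemma ker_pow {A : Matrix I I ℂ} (h : GroupInvertible A) (m : ℕ) :
    LinearMap.ker (A ^ (m + 1)).mulVecLin = LinearMap.ker A.mulVecLin := by
  induction m with
  | zero => simp
  | succ m ih =>
    ext v
    simp only [LinearMap.mem_ker, mulVecLin_apply]
    constructor
    · intro hv
      have h1 : (A ^ (m + 1)) *ᵥ (A *ᵥ v) = 0 := by
        rw [mulVec_mulVec, ← pow_succ]; exact hv
      have h2 : A *ᵥ v ∈ LinearMap.ker (A ^ (m + 1)).mulVecLin := h1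
      rw [ih, LinearMap.mem_ker, mulVecLin_apply] at h2
      have h3 : v ∈ LinearMap.ker (A ^ 2).mulVecLin := by
        simp only [LinearMap.mem_ker, mulVecLin_apply, pow_two, ← mulVec_mulVec]
        exact h2
      rw [ker_sq h, LinearMap.mem_ker, mulVecLin_apply] at h3
      exact h3
    · intro hv
      rw [pow_succ, ← mulVec_mulVec, hv, mulVec_zero]

lemma rank_pow {A : Matrix I I ℂ} (h : GroupInvertible A) (m : ℕ) :
    (A ^ (m + 1)).rank = A.rank := by
  have h1 := LinearMap.finrank_range_add_finrank_ker (A.mulVecLin)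
  have h2 := LinearMap.finrank_range_add_finrank_ker ((A ^ (m + 1)).mulVecLin)
  rw [ker_pow h m] at h2
  rw [Matrix.rank, Matrix.rank]
  omega

/-- The core-EP inverse of `A` equals the core inverse of the group-invertible
part `A₁` of its core-EP decomposition. -/
theorem coreEP_inv_eq_core_inv_of_part {n : ℕ} (A A₁ A₂ X Y : Matrix (Fin n) (Fin n) ℂ)
    (k : ℕ) (hk : HasIndex A k) (hdec : IsCoreEPDecomp A A₁ A₂ k)
    (hX : IsCoreEPInv A X k) (hY : IsCoreInv A₁ Y) :
    X = Y := by
  obtain ⟨hA, hG, hN, hHerm, hA21⟩ := hdec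
  obtain ⟨⟨D, hD, hAD⟩, hYr⟩ := hY
  obtain ⟨hX1, hX2, hX3, hXr⟩ := hX
  rcases Nat.eq_zero_or_pos k with hk0 | hkpos
  · subst hk0
    have h1 : (1 : Matrix (Fin n) (Fin n) ℂ) = 0 := by simpa using hN
    have hall : ∀ M : Matrix (Fin n) (Fin n) ℂ, M = 0 := fun M => by
      calc M = M * 1 := (Matrix.mul_one M).symm
        _ = M * 0 := by rw [h1]
        _ = 0 := Matrix.mul_zero M
    rw [hall X, hall Y]
  · obtain ⟨m, rfl⟩ : ∃ m, k = m + 1 := ⟨k - 1, (Nat.succ_pred_eq_of_pos hkpos).symm⟩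
    -- powers of A decompose
    have hpow : ∀ j : ℕ, ∃ B, A ^ (j + 1) = A₁ * B + A₂ ^ (j + 1) := by
      intro j
      induction j with
      | zero => exact ⟨1, by rw [pow_one, pow_one, Matrix.mul_one, hA]⟩
      | succ j ih =>
        obtain ⟨B, hB⟩ := ih
        refine ⟨B * A, ?_⟩
        have h0 : A₂ ^ (j + 1) * A₁ = 0 := by
          rw [pow_succ, Matrix.mul_assoc, hA21, Matrix.mul_zero]
        have h0' : A₂ ^ (j + 1) * A = A₂ ^ (j + 1 + 1) := by
          rw [hA, Matrix.mul_add, h0, zero_add, ← pow_succ]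
        calc A ^ (j + 1 + 1) = A ^ (j + 1) * A := pow_succ A (j + 1)
          _ = (A₁ * B + A₂ ^ (j + 1)) * A := by rw [hB]
          _ = A₁ * (B * A) + A₂ ^ (j + 1) * A := by rw [Matrix.add_mul, Matrix.mul_assoc]
          _ = A₁ * (B * A) + A₂ ^ (j + 1 + 1) := by rw [h0']
    obtain ⟨Bk, hBk0⟩ := hpow m
    have hBk : A ^ (m + 1) = A₁ * Bk := by rw [hBk0, hN, add_zero]
    obtain ⟨Bk1, hBk10⟩ := hpow (m + 1)
    have hN1 : A₂ ^ (m + 1 + 1) = 0 := by rw [pow_succ, hN, Matrix.zero_mul]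
    have hBk1 : A ^ (m + 1 + 1) = A₁ * Bk1 := by rw [hBk10, hN1, add_zero]
    obtain ⟨V, hV⟩ := exists_factor hXr
    obtain ⟨Z, hZ⟩ := exists_factor hYr
    -- Q := A * X equals A₁ * (Bk1 * V)
    have hQfact : A * X = A₁ * (Bk1 * V) := by
      rw [hV, ← Matrix.mul_assoc, ← pow_succ', hBk1, Matrix.mul_assoc]
    have hPA1 : A₁ * D * A₁ = A₁ := hD.1
    have hPherm : (A₁ * D)ᴴ = A₁ * D := hD.2.2.1
    have hPQ : A₁ * D * (A * X) = A * X := by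
      rw [hQfact, ← Matrix.mul_assoc, hPA1]
    have hQA : A * X * A ^ (m + 1 + 1) = A ^ (m + 1 + 1) := by
      rw [Matrix.mul_assoc, hX1, ← pow_succ']
    -- range A₁ ≤ range A^(m+2)
    have hApowA1 : ∀ j : ℕ, A ^ j * A₁ = A₁ ^ (j + 1) := by
      intro j
      induction j with
      | zero => simp
      | succ j ih =>
        have hAA1 : A * A₁ = A₁ * A₁ := by rw [hA, Matrix.add_mul, hA21, add_zero]
        rw [pow_succ, Matrix.mul_assoc, hAA1, ← Matrix.mul_assoc, ih, ← pow_succ]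
    have hrank1 : (A ^ (m + 1 + 1)).rank ≤ A₁.rank := by
      rw [hBk1]; exact Matrix.rank_mul_le_left A₁ Bk1
    have hrank2 : A₁.rank ≤ (A ^ (m + 1 + 1)).rank := by
      calc A₁.rank = (A₁ ^ (m + 1 + 1 + 1)).rank := (rank_pow hG (m + 1 + 1)).symm
        _ = (A ^ (m + 1 + 1) * A₁).rank := by rw [hApowA1 (m + 1 + 1)]
        _ ≤ (A ^ (m + 1 + 1)).rank := Matrix.rank_mul_le_left _ _
    have hle : LinearMap.range (A ^ (m + 1 + 1)).mulVecLin ≤ LinearMap.range A₁.mulVecLin := by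
      have h4 := rangeLE_mul A₁ Bk1
      rw [rangeLE, ← hBk1] at h4
      exact h4
    have heq : LinearMap.range (A ^ (m + 1 + 1)).mulVecLin = LinearMap.range A₁.mulVecLin :=
      Submodule.eq_of_le_of_finrank_eq hle (le_antisymm hrank1 hrank2)
    obtain ⟨S, hS⟩ := exists_factor (show rangeLE A₁ (A ^ (m + 1 + 1)) from heq.ge)
    have hQA1 : A * X * A₁ = A₁ := by rw [hS, ← Matrix.mul_assoc, hQA]
    have hQP : A * X * (A₁ * D) = A₁ * D := by rw [← Matrix.mul_assoc, hQA1]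
    -- A * X = A₁ * D
    have hQeqP : A * X = A₁ * D := by
      calc A * X = (A * X)ᴴ := hX3.symm
        _ = (A₁ * D * (A * X))ᴴ := by rw [hPQ]
        _ = (A * X)ᴴ * (A₁ * D)ᴴ := conjTranspose_mul _ _
        _ = A * X * (A₁ * D) := by rw [hX3, hPherm]
        _ = A₁ * D := hQP
    -- conclude X = Y
    have hXfact : X = A₁ * (Bk * V) := by rw [hV, hBk, Matrix.mul_assoc]
    have hA2X : A₂ * X = 0 := by
      rw [hXfact, ← Matrix.mul_assoc, hA21, Matrix.zero_mul]
    have hAX : A * X = A₁ * X := by rw [hA, Matrix.add_mul, hA2X, add_zero]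
    have hA1X : A₁ * X = A₁ * D := by rw [← hAX]; exact hQeqP
    have hA1Y : A₁ * Y = A₁ * D := hAD
    have hdiff : A₁ * (Bk * V - Z) = 0 := by
      apply cancel_left hG
      rw [Matrix.mul_sub, Matrix.mul_sub, ← hXfact, ← hZ, hA1X, hA1Y, sub_self]
    rw [hXfact, hZ]
    exact sub_eq_zero.mp (by rw [← Matrix.mul_sub]; exact hdiff)

end CoreEP
end

section
/- For square matrices A, B of the same order with Ind(A) = k, the relation A ≤^⊕ₑ B (i.e., A^⊕ₑ A = A^⊕ₑ B and A A^⊕ₑ = B A^⊕ₑ) holds if and only if A^{k+1} = B A^k and A* A^k = B* A^k. -/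
open Matrix

namespace CoreEP

variable {I : Type*} [Fintype I] [DecidableEq I]

private lemma exists_factor_s9 {m : Type*} [Fintype m] [DecidableEq m]
    {X A : Matrix m m ℂ}
    (h : LinearMap.range X.mulVecLin ≤ LinearMap.range A.mulVecLin) :
    ∃ Y, X = A * Y := by
  have hc : ∀ j : m, ∃ u : m → ℂ, A *ᵥ u = X *ᵥ Pi.single j 1 := by
    intro j
    exact h ⟨Pi.single j 1, rfl⟩
  choose u hu using hc
  refine ⟨Matrix.of fun i j => u j i, ?_⟩
  ext i j
  have := congrFun (hu j) i
  simp only [Matrix.mulVec, dotProduct] at this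
  simp only [Matrix.mul_apply, Matrix.of_apply]
  rw [this]
  simp [Pi.single_apply, mul_comm]

/-- Characterization of the core-EP order: `A ≤^⊕ₑ B` iff
`A^{k+1} = B A^k` and `Aᴴ A^k = Bᴴ A^k`, where `k = Ind A`. -/
theorem coreEP_order_iff {n : ℕ} (A B X : Matrix (Fin n) (Fin n) ℂ) (k : ℕ)
    (hk : HasIndex A k) (hX : IsCoreEPInv A X k) :
    (X * A = X * B ∧ A * X = B * X) ↔
      (A ^ (k + 1) = B * A ^ k ∧ Aᴴ * A ^ k = Bᴴ * A ^ k) := by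
  obtain ⟨h1, h2, h3, h4⟩ := hX
  obtain ⟨Y, hY⟩ := exists_factor_s9 h4
  -- range A^k = range A^(k+1), so A^k = A^(k+1) * C
  have hle : LinearMap.range (A ^ (k + 1)).mulVecLin ≤
      LinearMap.range (A ^ k).mulVecLin := by
    rw [show A ^ (k + 1) = A ^ k * A from pow_succ A k, Matrix.mulVecLin_mul]
    exact LinearMap.range_comp_le_range _ _
  have heq : LinearMap.range (A ^ k).mulVecLin =
      LinearMap.range (A ^ (k + 1)).mulVecLin := by
    have := hk.1
    unfold Matrix.rank at this
    exact (Submodule.eq_of_le_of_finrank_le hle this.ge).symm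
  obtain ⟨C, hC⟩ := exists_factor_s9 heq.le
  -- A * X * A ^ k = A ^ k
  have hAXA : A * X * A ^ k = A ^ k := by
    calc A * X * A ^ k = A * X * (A ^ (k + 1) * C) := by rw [← hC]
    _ = A * (X * A ^ (k + 1)) * C := by simp only [Matrix.mul_assoc]
    _ = A * A ^ k * C := by rw [h1]
    _ = A ^ (k + 1) * C := by rw [← pow_succ']
    _ = A ^ k := hC.symm
  constructor
  · rintro ⟨hXA, hAX⟩
    constructor
    · calc A ^ (k + 1) = A * A ^ k := pow_succ' A k
      _ = A * (X * A ^ (k + 1)) := by rw [h1]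
      _ = B * X * A ^ (k + 1) := by rw [← hAX, Matrix.mul_assoc]
      _ = B * (X * A ^ (k + 1)) := by simp only [Matrix.mul_assoc]
      _ = B * A ^ k := by rw [h1]
    · have hAXB : A * X * B = A * X * A := by
        calc A * X * B = A * (X * B) := by simp only [Matrix.mul_assoc]
        _ = A * (X * A) := by rw [← hXA]
        _ = A * X * A := by simp only [Matrix.mul_assoc]
      calc Aᴴ * A ^ k = Aᴴ * (A * X * A ^ k) := by rw [hAXA]
      _ = Aᴴ * (A * X) * A ^ k := by simp only [Matrix.mul_assoc]
      _ = Aᴴ * (A * X)ᴴ * A ^ k := by rw [h3]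
      _ = (A * X * A)ᴴ * A ^ k := by
            simp only [Matrix.conjTranspose_mul, Matrix.mul_assoc]
      _ = (A * X * B)ᴴ * A ^ k := by rw [hAXB]
      _ = Bᴴ * (A * X)ᴴ * A ^ k := by
            simp only [Matrix.conjTranspose_mul, Matrix.mul_assoc]
      _ = Bᴴ * (A * X) * A ^ k := by rw [h3]
      _ = Bᴴ * (A * X * A ^ k) := by simp only [Matrix.mul_assoc]
      _ = Bᴴ * A ^ k := by rw [hAXA]
  · rintro ⟨hBA, hH⟩
    have hAX : A * X = B * X := by
      calc A * X = A * (A ^ k * Y) := by rw [hY]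
      _ = A ^ (k + 1) * Y := by rw [← Matrix.mul_assoc, ← pow_succ']
      _ = B * A ^ k * Y := by rw [hBA]
      _ = B * X := by rw [hY, Matrix.mul_assoc]
    refine ⟨?_, hAX⟩
    -- (A^k)ᴴ * A = (A^k)ᴴ * B
    have hH' : (A ^ k)ᴴ * A = (A ^ k)ᴴ * B := by
      have := congrArg Matrix.conjTranspose hH
      simpa only [Matrix.conjTranspose_mul, Matrix.conjTranspose_conjTranspose]
        using this
    -- A * X * A = A * X * B
    have key : A * X * A = A * X * B := by
      have hAXform : A * X = Yᴴ * Aᴴ * (A ^ k)ᴴ := by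
        calc A * X = (A * X)ᴴ := h3.symm
        _ = (A * (A ^ k * Y))ᴴ := by rw [hY]
        _ = (A ^ k * A * Y)ᴴ := by
              rw [← Matrix.mul_assoc, ← pow_succ', pow_succ]
        _ = Yᴴ * Aᴴ * (A ^ k)ᴴ := by
              simp only [Matrix.conjTranspose_mul, Matrix.mul_assoc]
      calc A * X * A = Yᴴ * Aᴴ * ((A ^ k)ᴴ * A) := by
            rw [hAXform, Matrix.mul_assoc]
      _ = Yᴴ * Aᴴ * ((A ^ k)ᴴ * B) := by rw [hH']
      _ = A * X * B := by rw [hAXform]; simp only [Matrix.mul_assoc]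
    calc X * A = X * A * X * A := by rw [h2]
    _ = X * (A * X * A) := by simp only [Matrix.mul_assoc]
    _ = X * (A * X * B) := by rw [key]
    _ = X * A * X * B := by simp only [Matrix.mul_assoc]
    _ = X * B := by rw [h2]

end CoreEP
end

section
/- The core-minus partial order implies the minus partial order: if A ≤^CM B then rank(B − A) = rank(B) − rank(A). -/
open Matrix

namespace CoreEP

variable {I : Type*} [Fintype I] [DecidableEq I]

open Module Submodule LinearMap
open scoped ComplexOrder

variable {n : ℕ}

lemma sup_rank_le {M : Matrix (Fin n) (Fin n) ℂ} {V₁ V₂ : Submodule ℂ (Fin n → ℂ)}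
    (h1 : V₁ ≤ LinearMap.range M.mulVecLin) (h2 : V₂ ≤ LinearMap.range M.mulVecLin)
    (h : V₁ ⊓ V₂ = ⊥) : finrank ℂ V₁ + finrank ℂ V₂ ≤ M.rank := by
  rw [Matrix.rank, ← Submodule.finrank_sup_add_finrank_inf_eq V₁ V₂, h, finrank_bot, add_zero]
  exact Submodule.finrank_mono (sup_le h1 h2)

lemma rank_add_le' (X Y : Matrix (Fin n) (Fin n) ℂ) : (X + Y).rank ≤ X.rank + Y.rank := by
  rw [Matrix.rank, Matrix.rank, Matrix.rank]
  refine le_trans (Submodule.finrank_mono ?_)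
    (Submodule.finrank_add_le_finrank_add_finrank _ _)
  rintro v ⟨x, rfl⟩
  simp only [mulVecLin_apply, Matrix.add_mulVec]
  exact add_mem (mem_sup_left ⟨x, by simp⟩) (mem_sup_right ⟨x, by simp⟩)

lemma range_mul_le (X Y : Matrix (Fin n) (Fin n) ℂ) :
    LinearMap.range (X * Y).mulVecLin ≤ LinearMap.range X.mulVecLin := by
  rw [mulVecLin_mul]; exact LinearMap.range_comp_le_range _ _

lemma minus_of_inner (A B G : Matrix (Fin n) (Fin n) ℂ) (hAGA : A * G * A = A)
    (hGA : G * A = G * B) (hAG : A * G = B * G) : MinusLE A B := by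
  have hA : A = B * (G * A) := by rw [← Matrix.mul_assoc, ← hAG, hAGA]
  have hBA : B - A = B * (1 - G * A) := by rw [Matrix.mul_sub, Matrix.mul_one, ← hA]
  have h1 : LinearMap.range A.mulVecLin ≤ LinearMap.range B.mulVecLin := by
    rw [hA]; exact range_mul_le _ _
  have h2 : LinearMap.range (B - A).mulVecLin ≤ LinearMap.range B.mulVecLin := by
    rw [hBA]; exact range_mul_le _ _
  have h3 : LinearMap.range A.mulVecLin ⊓ LinearMap.range (B - A).mulVecLin = ⊥ := by
    rw [eq_bot_iff]
    rintro v ⟨⟨x, hx⟩, ⟨y, hy⟩⟩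
    simp only [mulVecLin_apply] at hx hy
    have e1 : (A * G) *ᵥ v = v := by
      rw [← hx, Matrix.mulVec_mulVec, hAGA]
    have e2 : (A * G) *ᵥ v = 0 := by
      rw [← hy, Matrix.mulVec_mulVec, Matrix.mul_sub, Matrix.mul_assoc A G B, ← hGA,
        ← Matrix.mul_assoc, hAGA, sub_self, Matrix.zero_mulVec]
    rw [Submodule.mem_bot, ← e1, e2]
  have hle : A.rank + (B - A).rank ≤ B.rank := sup_rank_le h1 h2 h3
  have hge : B.rank ≤ (B - A).rank + A.rank := by
    have := rank_add_le' (B - A) A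
    rwa [sub_add_cancel] at this
  unfold MinusLE; omega

lemma rank_decomp (A₁ A₂ : Matrix (Fin n) (Fin n) ℂ) (hg : GroupInvertible A₁)
    (ho : A₁ᴴ * A₂ = 0) (hn : A₂ * A₁ = 0) : (A₁ + A₂).rank = A₁.rank + A₂.rank := by
  set A := A₁ + A₂ with hA
  -- orthogonality of column spaces
  have horth : LinearMap.range A₁.mulVecLin ⊓ LinearMap.range A₂.mulVecLin = ⊥ := by
    rw [eq_bot_iff]
    rintro v ⟨⟨x, hx⟩, ⟨y, hy⟩⟩
    simp only [mulVecLin_apply] at hx hy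
    have : star v ⬝ᵥ v = 0 := by
      have e : star v ⬝ᵥ v = star (A₁ *ᵥ x) ⬝ᵥ (A₂ *ᵥ y) := by rw [hx, hy]
      rw [e, star_mulVec, dotProduct_mulVec, vecMul_vecMul, ho, Matrix.vecMul_zero,
        zero_dotProduct]
    rw [Submodule.mem_bot]
    exact dotProduct_star_self_eq_zero.mp this
  -- range A₁² = range A₁
  have hle2 : LinearMap.range (A₁ ^ 2).mulVecLin ≤ LinearMap.range A₁.mulVecLin := by
    rw [pow_two]; exact range_mul_le _ _
  have hreq : LinearMap.range (A₁ ^ 2).mulVecLin = LinearMap.range A₁.mulVecLin := by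
    apply Submodule.eq_of_le_of_finrank_le hle2
    exact le_of_eq hg.symm
  -- ker ⊔ range = ⊤ for A₁
  have hki : LinearMap.range A₁.mulVecLin ⊓ LinearMap.ker A₁.mulVecLin = ⊥ := by
    rw [eq_bot_iff]
    rintro v ⟨hvr, hvk⟩
    have hsub : ∀ x ∈ LinearMap.range A₁.mulVecLin,
        A₁.mulVecLin x ∈ LinearMap.range A₁.mulVecLin := fun x _ => ⟨x, rfl⟩
    set g := A₁.mulVecLin.restrict hsub with hgdef
    have hgsurj : Function.Surjective g := by
      rintro ⟨w, hw⟩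
      rw [← hreq] at hw
      obtain ⟨z, hz⟩ := hw
      simp only [pow_two, mulVecLin_mul, LinearMap.comp_apply] at hz
      refine ⟨⟨A₁.mulVecLin z, ⟨z, rfl⟩⟩, ?_⟩
      exact Subtype.ext hz
    have hginj : Function.Injective g :=
      (LinearMap.injective_iff_surjective).mpr hgsurj
    have : g ⟨v, hvr⟩ = g ⟨0, Submodule.zero_mem _⟩ := by
      apply Subtype.ext
      simp only [hgdef, LinearMap.restrict_apply]
      simpa using hvk
    have := hginj this
    simpa [Submodule.mem_bot] using congrArg Subtype.val this
  have hsup : LinearMap.range A₁.mulVecLin ⊔ LinearMap.ker A₁.mulVecLin = ⊤ := by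
    apply Submodule.eq_top_of_finrank_eq
    have h5 := Submodule.finrank_sup_add_finrank_inf_eq (LinearMap.range A₁.mulVecLin)
      (LinearMap.ker A₁.mulVecLin)
    rw [hki, finrank_bot, add_zero] at h5
    rw [h5, LinearMap.finrank_range_add_finrank_ker A₁.mulVecLin]
  -- col A₂ ≤ col A
  have hA2le : LinearMap.range A₂.mulVecLin ≤ LinearMap.range A.mulVecLin := by
    rintro v ⟨y, rfl⟩
    have hy : y ∈ LinearMap.range A₁.mulVecLin ⊔ LinearMap.ker A₁.mulVecLin := by
      rw [hsup]; trivial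
    obtain ⟨u, hu, w, hw, rfl⟩ := Submodule.mem_sup.mp hy
    obtain ⟨z, rfl⟩ := hu
    refine ⟨w, ?_⟩
    simp only [mulVecLin_apply]
    rw [Matrix.mulVec_add, Matrix.mulVec_mulVec, hn, Matrix.zero_mulVec, zero_add,
      hA, Matrix.add_mulVec, show A₁ *ᵥ w = 0 from hw, zero_add]
  -- col A₁² ≤ col A
  have hA1le : LinearMap.range (A₁ ^ 2).mulVecLin ≤ LinearMap.range A.mulVecLin := by
    have : A₁ ^ 2 = A * A₁ := by
      rw [hA, Matrix.add_mul, hn, add_zero, pow_two]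
    rw [this]; exact range_mul_le _ _
  have hinf : LinearMap.range (A₁ ^ 2).mulVecLin ⊓ LinearMap.range A₂.mulVecLin = ⊥ := by
    rw [hreq]; exact horth
  have hlow : A₁.rank + A₂.rank ≤ A.rank := by
    have := sup_rank_le hA1le hA2le hinf
    rwa [show finrank ℂ ↥(LinearMap.range (A₁ ^ 2).mulVecLin) = A₁.rank from hg,
      show finrank ℂ ↥(LinearMap.range A₂.mulVecLin) = A₂.rank from rfl] at this
  have hhigh : A.rank ≤ A₁.rank + A₂.rank := rank_add_le' A₁ A₂
  omega

/-- The core-minus partial order implies the minus partial order. -/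
theorem core_minus_implies_minus {n : ℕ} (A B : Matrix (Fin n) (Fin n) ℂ)
    (h : CMLE A B) : MinusLE A B := by
  obtain ⟨k, l, A₁, A₂, B₁, B₂, -, -, ⟨hAeq, hgA, -, hoA, hnA⟩, ⟨hBeq, hgB, -, hoB, hnB⟩,
    ⟨-, -, X, ⟨⟨D, hD, hAX⟩, -⟩, hXA, hAX'⟩, hm2⟩ := h
  have hinner : A₁ * X * A₁ = A₁ := by rw [hAX, hD.1]
  have hm1 : MinusLE A₁ B₁ := minus_of_inner A₁ B₁ X hinner hXA hAX'
  have hrA : A.rank = A₁.rank + A₂.rank := by rw [hAeq]; exact rank_decomp _ _ hgA hoA hnA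
  have hrB : B.rank = B₁.rank + B₂.rank := by rw [hBeq]; exact rank_decomp _ _ hgB hoB hnB
  have hd : B - A = (B₁ - A₁) + (B₂ - A₂) := by rw [hAeq, hBeq]; abel
  have h1 : (B - A).rank ≤ (B₁ - A₁).rank + (B₂ - A₂).rank := by
    rw [hd]; exact rank_add_le' _ _
  have h2 : B.rank ≤ (B - A).rank + A.rank := by
    have := rank_add_le' (B - A) A
    rwa [sub_add_cancel] at this
  unfold MinusLE at hm1 hm2 ⊢
  omega


end CoreEP
end

section
/- Let A, B ∈ ℂ^{n×n} both have index at most 1 (rank(A²) = rank(A), rank(B²) = rank(B)). Then A ≤^⊕ B (i.e., A^⊕A = A^⊕B and AA^⊕ = BA^⊕) if and only if A†A = A†B and A² = BA. -/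
open Matrix

namespace CoreEP

variable {I : Type*} [Fintype I] [DecidableEq I]

lemma ext_mulVec {n : ℕ} {M N : Matrix (Fin n) (Fin n) ℂ}
    (h : ∀ v, M *ᵥ v = N *ᵥ v) : M = N := by
  ext i j
  simpa using congrFun (h (Pi.single j 1)) i

lemma mul_cancel_left {n : ℕ} {A N : Matrix (Fin n) (Fin n) ℂ} (hA : GroupInvertible A)
    (h : A * (A * N) = 0) : A * N = 0 := by
  have hker : LinearMap.ker (A * A).mulVecLin = LinearMap.ker A.mulVecLin := by
    symm
    apply Submodule.eq_of_le_of_finrank_eq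
    · intro v hv
      simp only [LinearMap.mem_ker, mulVecLin_apply] at *
      rw [← mulVec_mulVec, hv, mulVec_zero]
    · have h1 := LinearMap.finrank_range_add_finrank_ker A.mulVecLin
      have h2 := LinearMap.finrank_range_add_finrank_ker (A * A).mulVecLin
      have h3 : (A ^ 2).rank = A.rank := hA
      rw [pow_two] at h3
      unfold Matrix.rank at h3
      omega
  apply ext_mulVec
  intro v
  have hv : N *ᵥ v ∈ LinearMap.ker (A * A).mulVecLin := by
    simp only [LinearMap.mem_ker, mulVecLin_apply, mulVec_mulVec, ← mul_assoc]
    rw [mul_assoc, h, zero_mulVec]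
  rw [hker] at hv
  simp only [LinearMap.mem_ker, mulVecLin_apply] at hv
  rw [← mulVec_mulVec, hv, zero_mulVec]

/-- For matrices of index at most one, `A ≤^⊕ B` iff `A† A = A† B` and `A² = B A`. -/
theorem core_order_iff_mp_and_sq {n : ℕ} (A B X D : Matrix (Fin n) (Fin n) ℂ)
    (hA : GroupInvertible A) (hB : GroupInvertible B)
    (hX : IsCoreInv A X) (hD : IsMPInv A D) :
    (X * A = X * B ∧ A * X = B * X) ↔ (D * A = D * B ∧ A ^ 2 = B * A) := by
  obtain ⟨⟨D', hD', hXD'⟩, hrange⟩ := hX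
  obtain ⟨h1, h2, h3, h4⟩ := hD
  obtain ⟨h1', h2', h3', h4'⟩ := hD'
  have hAh : Aᴴ = Aᴴ * (A * D) := by
    calc Aᴴ = (A * D * A)ᴴ := by rw [h1]
      _ = Aᴴ * (A * D)ᴴ := by rw [conjTranspose_mul]
      _ = Aᴴ * (A * D) := by rw [h3]
  have hADD' : A * D' = A * D := by
    calc A * D' = (A * D')ᴴ := h3'.symm
      _ = D'ᴴ * Aᴴ := by rw [conjTranspose_mul]
      _ = D'ᴴ * (Aᴴ * (A * D)) := by rw [← hAh]
      _ = (D'ᴴ * Aᴴ) * (A * D) := by rw [mul_assoc]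
      _ = (A * D')ᴴ * (A * D) := by rw [conjTranspose_mul]
      _ = (A * D') * (A * D) := by rw [h3']
      _ = (A * D' * A) * D := by simp only [mul_assoc]
      _ = A * D := by rw [h1']
  have hAX : A * X = A * D := hXD'.trans hADD'
  have hAXA : A * X * A = A := by rw [hAX, h1]
  have hF1 : A * D * X = X := by
    apply ext_mulVec
    intro v
    obtain ⟨w, hw⟩ := hrange (LinearMap.mem_range_self X.mulVecLin v)
    simp only [mulVecLin_apply] at hw
    calc (A * D * X) *ᵥ v = A *ᵥ (D *ᵥ (X *ᵥ v)) := by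
          simp only [mulVec_mulVec, mul_assoc]
      _ = A *ᵥ (D *ᵥ (A *ᵥ w)) := by rw [hw]
      _ = (A * D * A) *ᵥ w := by simp only [mulVec_mulVec, mul_assoc]
      _ = A *ᵥ w := by rw [h1]
      _ = X *ᵥ v := hw
  have hF1' : A * (D * X) = X := by rw [← mul_assoc, hF1]
  have hN : A * (D * (X * A * A) - D * A) = X * A * A - A := by
    rw [mul_sub]
    simp only [← mul_assoc]
    rw [hF1, h1]
  have hAN : A * (A * (D * (X * A * A) - D * A)) = 0 := by
    rw [hN, mul_sub]
    simp only [← mul_assoc]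
    rw [hAXA, sub_self]
  have hF2 : X * A * A = A := by
    have := mul_cancel_left hA hAN
    rw [hN, sub_eq_zero] at this
    exact this
  constructor
  · rintro ⟨hXAB, hAXB⟩
    have hAhX : Aᴴ * (A * X) = Aᴴ := by rw [hAX, ← hAh]
    have hAhB : Aᴴ * B = Aᴴ * A := by
      calc Aᴴ * B = (Aᴴ * (A * X)) * B := by rw [hAhX]
        _ = Aᴴ * (A * (X * B)) := by simp only [mul_assoc]
        _ = Aᴴ * (A * (X * A)) := by rw [← hXAB]
        _ = (Aᴴ * (A * X)) * A := by simp only [mul_assoc]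
        _ = Aᴴ * A := by rw [hAhX]
    have hDD : D = D * Dᴴ * Aᴴ := by
      calc D = D * A * D := h2.symm
        _ = D * (A * D) := by rw [mul_assoc]
        _ = D * (A * D)ᴴ := by rw [h3]
        _ = D * (Dᴴ * Aᴴ) := by rw [conjTranspose_mul]
        _ = D * Dᴴ * Aᴴ := by rw [mul_assoc]
    constructor
    · calc D * A = (D * Dᴴ * Aᴴ) * A := by rw [← hDD]
        _ = D * Dᴴ * (Aᴴ * A) := by simp only [mul_assoc]
        _ = D * Dᴴ * (Aᴴ * B) := by rw [hAhB]
        _ = (D * Dᴴ * Aᴴ) * B := by simp only [mul_assoc]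
        _ = D * B := by rw [← hDD]
    · rw [sq]
      calc A * A = (A * X * A) * A := by rw [hAXA]
        _ = (A * X) * (A * A) := by simp only [mul_assoc]
        _ = (B * X) * (A * A) := by rw [hAXB]
        _ = B * (X * A * A) := by simp only [mul_assoc]
        _ = B * A := by rw [hF2]
  · rintro ⟨hDAB, hsq⟩
    have hXAX : X * A * X = X := by
      calc X * A * X = X * A * (A * D * X) := by rw [hF1]
        _ = (X * A * A) * (D * X) := by simp only [mul_assoc]
        _ = A * (D * X) := by rw [hF2]
        _ = X := hF1'
    have hXAD : X * (A * D) = X := by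
      calc X * (A * D) = X * (A * X) := by rw [hAX]
        _ = X := by rw [← mul_assoc, hXAX]
    constructor
    · calc X * A = X * (A * D) * A := by rw [hXAD]
        _ = X * (A * (D * A)) := by simp only [mul_assoc]
        _ = X * (A * (D * B)) := by rw [hDAB]
        _ = X * (A * D) * B := by simp only [mul_assoc]
        _ = X * B := by rw [hXAD]
    · calc A * X = A * (A * (D * X)) := by rw [hF1']
        _ = (A * A) * (D * X) := by simp only [mul_assoc]
        _ = (B * A) * (D * X) := by rw [← hsq, sq]
        _ = B * (A * (D * X)) := by simp only [mul_assoc]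
        _ = B * X := by rw [hF1']


end CoreEP
end
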